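/- Let k be an even integer with k ≥ 2. Let H = (V,E) be a k-uniform hypergraph with n vertices, m ≥ 1 edges, and minimum degree δ, and let λ be the least element of the set {k·∑_{e∈E} ∏_{i∈e} x_i : x ∈ ℝ^V, ∑_{i∈V} x_i^k = 1}. Then the 1-independence number (strong independence number) satisfies α_1(H) ≤ (km − nλ)·(−λ)^{1/(k−1)} / ( (k−1)·δ^{k/(k−1)} + (kδ − λ)·(−λ)^{1/(k−1)} ). -/

import Mathlib

open Finset

/-- Scaling: the eigenvalue lower bound applies to any vector with positive `k`-norm sum. -/
lemma hoffman_scale_aux {V : Type*} [Fintype V] (k : ℕ) (hk0 : k ≠ 0)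
    (E : Finset (Finset V)) (huniform : ∀ e ∈ E, e.card = k)
    (lam : ℝ)
    (hlb : lam ∈ lowerBounds {y : ℝ | ∃ x : V → ℝ, ∑ i, x i ^ k = 1 ∧
      y = k * ∑ e ∈ E, ∏ i ∈ e, x i})
    (x : V → ℝ) (hx : 0 < ∑ i, x i ^ k) :
    lam * ∑ i, x i ^ k ≤ k * ∑ e ∈ E, ∏ i ∈ e, x i := by
  set s := ∑ i, x i ^ k with hs
  set c : ℝ := s ^ (-(1:ℝ)/k) with hc
  have hck : c ^ k = s⁻¹ := by
    rw [hc, ← Real.rpow_natCast (s ^ (-(1:ℝ)/(k:ℝ))) k, ← Real.rpow_mul hx.le]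
    rw [show (-(1:ℝ)/(k:ℝ) * (k:ℕ)) = -1 by
      have : (k:ℝ) ≠ 0 := Nat.cast_ne_zero.mpr hk0
      field_simp]
    exact Real.rpow_neg_one s
  have key : lam ≤ (k:ℝ) * ∑ e ∈ E, ∏ i ∈ e, (c * x i) := by
    apply hlb
    refine ⟨fun i => c * x i, ?_, rfl⟩
    simp only [mul_pow, ← Finset.mul_sum, hck, ← hs]
    exact inv_mul_cancel₀ (ne_of_gt hx)
  have hprod : ∀ e ∈ E, ∏ i ∈ e, (c * x i) = c ^ k * ∏ i ∈ e, x i := by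
    intro e he
    rw [Finset.prod_mul_distrib, Finset.prod_const, huniform e he]
  rw [Finset.sum_congr rfl hprod, ← Finset.mul_sum, hck] at key
  have := mul_le_mul_of_nonneg_right key hx.le
  calc lam * s ≤ (k:ℝ) * (s⁻¹ * ∑ e ∈ E, ∏ i ∈ e, x i) * s := this
    _ = (k:ℝ) * ∑ e ∈ E, ∏ i ∈ e, x i := by field_simp

/-- The least eigenvalue of a nonempty even uniform hypergraph is at most `-1`. -/
lemma hoffman_lam_le_neg_one {V : Type*} [Fintype V] [DecidableEq V]
    (k : ℕ) (hk : Even k) (hk2 : 2 ≤ k)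
    (E : Finset (Finset V)) (huniform : ∀ e ∈ E, e.card = k) (hm : 1 ≤ E.card)
    (lam : ℝ)
    (hlb : lam ∈ lowerBounds {y : ℝ | ∃ x : V → ℝ, ∑ i, x i ^ k = 1 ∧
      y = k * ∑ e ∈ E, ∏ i ∈ e, x i}) :
    lam ≤ -1 := by
  have hk0 : (k:ℝ) ≠ 0 := by positivity
  obtain ⟨e₀, he₀⟩ := Finset.card_pos.mp hm
  have he₀k : e₀.card = k := huniform e₀ he₀
  obtain ⟨v₀, hv₀⟩ := Finset.card_pos.mp (by omega : 0 < e₀.card)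
  set t : ℝ := (k:ℝ) ^ (-(1:ℝ)/(k:ℝ)) with ht
  have htpos : 0 < t := Real.rpow_pos_of_pos (by positivity) _
  have htk : t ^ k = (k:ℝ)⁻¹ := by
    rw [ht, ← Real.rpow_natCast ((k:ℝ) ^ (-(1:ℝ)/(k:ℝ))) k,
      ← Real.rpow_mul (by positivity)]
    rw [show (-(1:ℝ)/(k:ℝ) * (k:ℕ)) = -1 by field_simp]
    exact Real.rpow_neg_one _
  set x : V → ℝ := fun i => if i = v₀ then -t else if i ∈ e₀ then t else 0 with hx
  have hxsum : ∑ i, x i ^ k = 1 := by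
    have h1 : ∑ i, x i ^ k = ∑ i ∈ e₀, x i ^ k := by
      refine (Finset.sum_subset (Finset.subset_univ e₀) ?_).symm
      intro i _ hi
      have : x i = 0 := by
        simp only [hx]
        rw [if_neg (by rintro rfl; exact hi hv₀), if_neg hi]
      rw [this, zero_pow (by omega)]
    rw [h1]
    have h2 : ∀ i ∈ e₀, x i ^ k = t ^ k := by
      intro i hi
      by_cases h : i = v₀
      · simp only [hx, if_pos h]; exact hk.neg_pow t
      · simp only [hx, if_neg h, if_pos hi]
    rw [Finset.sum_congr rfl h2, Finset.sum_const, he₀k, htk, nsmul_eq_mul,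
      mul_inv_cancel₀ hk0]
  have hprod0 : ∑ e ∈ E, ∏ i ∈ e, x i = -(t ^ k) := by
    rw [Finset.sum_eq_single e₀ ?_ (fun h => absurd he₀ h)]
    · rw [← Finset.mul_prod_erase e₀ x hv₀]
      have : ∏ i ∈ e₀.erase v₀, x i = t ^ (k - 1) := by
        rw [Finset.prod_congr rfl (fun i hi => ?_), Finset.prod_const,
          Finset.card_erase_of_mem hv₀, he₀k]
        simp only [hx, if_neg (Finset.ne_of_mem_erase hi),
          if_pos (Finset.mem_of_mem_erase hi)]
      rw [this]
      have : x v₀ = -t := by simp [hx]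
      rw [this, neg_mul, ← pow_succ', show (k-1)+1 = k by omega]
    · intro e he hne
      obtain ⟨w, hwe, hwe₀⟩ : ∃ w ∈ e, w ∉ e₀ := by
        by_contra h
        push_neg at h
        exact hne (Finset.eq_of_subset_of_card_le h
          (by rw [huniform e he, he₀k]))
      refine Finset.prod_eq_zero hwe ?_
      simp only [hx]
      rw [if_neg (by rintro rfl; exact hwe₀ hv₀), if_neg hwe₀]
  have : lam ≤ (k:ℝ) * ∑ e ∈ E, ∏ i ∈ e, x i := hlb ⟨x, hxsum, rfl⟩
  rw [hprod0, htk] at this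
  calc lam ≤ (k:ℝ) * -(k:ℝ)⁻¹ := this
    _ = -1 := by field_simp

set_option maxHeartbeats 1600000 in
/-- **Hoffman-type bound for the strong independence number of an even uniform
hypergraph** (Corollary 3.1, inequality part, the case `t = 1`). -/
theorem hoffman_bound_strong_independence_even_hypergraph
    {V : Type*} [Fintype V] [DecidableEq V]
    (k : ℕ) (hk : Even k) (hk2 : 2 ≤ k)
    (E : Finset (Finset V)) (huniform : ∀ e ∈ E, e.card = k) (hm : 1 ≤ E.card)
    (δ : ℕ) (hδ : IsLeast (Set.range fun i : V => (E.filter fun e => i ∈ e).card) δ)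
    (lam : ℝ)
    (hlam : IsLeast {y : ℝ | ∃ x : V → ℝ, ∑ i, x i ^ k = 1 ∧
      y = k * ∑ e ∈ E, ∏ i ∈ e, x i} lam)
    (α : ℕ)
    (hα : IsGreatest {c : ℕ | ∃ S : Finset V,
      (∀ e ∈ E, (e ∩ S).card = 0 ∨ (e ∩ S).card = 1) ∧ S.card = c} α) :
    (α : ℝ) ≤ (k * E.card - Fintype.card V * lam) * (-lam) ^ ((1 : ℝ) / (k - 1)) /
      ((k - 1) * (δ : ℝ) ^ ((k : ℝ) / (k - 1)) +
        (k * δ - lam) * (-lam) ^ ((1 : ℝ) / (k - 1))) := by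
  classical
  obtain ⟨S, hS1, hScard⟩ := hα.1
  have hlb := hlam.2
  have hlam1 : lam ≤ -1 := hoffman_lam_le_neg_one k hk hk2 E huniform hm lam hlb
  have hkR : (2:ℝ) ≤ (k:ℝ) := by exact_mod_cast hk2
  have hk1 : (0:ℝ) < (k:ℝ) - 1 := by linarith
  set μ : ℝ := -lam with hμdef
  have hμ : 0 < μ := by rw [hμdef]; linarith
  have hlm : lam = -μ := by rw [hμdef, neg_neg]
  set r : ℝ := (1:ℝ) / ((k:ℝ) - 1) with hrdef
  have hr : 0 < r := by rw [hrdef]; positivity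
  set A : ℝ := (δ:ℝ) ^ r with hAdef
  set B : ℝ := μ ^ r with hBdef
  have hA : 0 ≤ A := Real.rpow_nonneg (by positivity) _
  have hB : 0 < B := Real.rpow_pos_of_pos hμ _
  set a : ℝ := -(A / B) with hadef
  have ha0 : a ≤ 0 := by rw [hadef]; simp [div_nonneg hA hB.le]
  have hak : a ^ k = A ^ k / B ^ k := by rw [hadef, hk.neg_pow, div_pow]
  have hakn : 0 ≤ a ^ k := by rw [hak]; positivity
  -- edge counting
  set D := (E.filter fun e => (e ∩ S).card = 1).card with hDdef
  set M := (E.filter fun e => ¬ (e ∩ S).card = 1).card with hMdef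
  have hDM : D + M = E.card := Finset.card_filter_add_card_filter_not _
  have hδD : δ * α ≤ D := by
    have h1 : ∀ i : V, δ ≤ (E.filter fun e => i ∈ e).card := fun i => hδ.2 ⟨i, rfl⟩
    calc δ * α = ∑ _i ∈ S, δ := by rw [Finset.sum_const, hScard, smul_eq_mul, mul_comm]
      _ ≤ ∑ i ∈ S, (E.filter fun e => i ∈ e).card := Finset.sum_le_sum fun i _ => h1 i
      _ = ∑ i ∈ S, ∑ e ∈ E, if i ∈ e then 1 else 0 :=
          Finset.sum_congr rfl fun i _ => Finset.card_filter _ _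
      _ = ∑ e ∈ E, ∑ i ∈ S, if i ∈ e then 1 else 0 := Finset.sum_comm
      _ = ∑ e ∈ E, (e ∩ S).card := by
          refine Finset.sum_congr rfl fun e _ => ?_
          rw [← Finset.card_filter]
          congr 1
          ext i
          simp only [Finset.mem_inter, Finset.mem_filter, and_comm]
      _ = ∑ e ∈ E, if (e ∩ S).card = 1 then 1 else 0 := by
          refine Finset.sum_congr rfl fun e he => ?_
          rcases hS1 e he with h | h <;> simp [h]
      _ = D := (Finset.card_filter _ _).symm
  -- the test vector
  set x : V → ℝ := fun i => if i ∈ S then a else 1 with hxdef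
  have hsumS : ∑ i ∈ S, x i ^ k = (α:ℝ) * a ^ k := by
    calc ∑ i ∈ S, x i ^ k = ∑ _i ∈ S, a ^ k :=
          Finset.sum_congr rfl fun i hi => by simp only [hxdef, if_pos hi]
      _ = (α:ℝ) * a ^ k := by rw [Finset.sum_const, hScard, nsmul_eq_mul]
  have hsumSc : ∑ i ∈ Sᶜ, x i ^ k = (Sᶜ.card : ℝ) := by
    calc ∑ i ∈ Sᶜ, x i ^ k = ∑ _i ∈ Sᶜ, (1:ℝ) :=
          Finset.sum_congr rfl fun i hi => by
            simp only [hxdef, if_neg (Finset.mem_compl.mp hi), one_pow]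
      _ = (Sᶜ.card : ℝ) := by rw [Finset.sum_const, nsmul_eq_mul, mul_one]
  have hsum : ∑ i, x i ^ k = (α:ℝ) * a ^ k + (Sᶜ.card : ℝ) := by
    rw [← Finset.sum_add_sum_compl S, hsumS, hsumSc]
  have hprodE : ∀ e ∈ E, ∏ i ∈ e, x i = a ^ (e ∩ S).card := by
    intro e _
    calc ∏ i ∈ e, x i = ∏ i ∈ e ∩ S, a := Finset.prod_ite_mem e S fun _ => a
      _ = a ^ (e ∩ S).card := Finset.prod_const a
  have hP : ∑ e ∈ E, ∏ i ∈ e, x i = (D:ℝ) * a + (M:ℝ) := by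
    rw [Finset.sum_congr rfl hprodE,
      ← Finset.sum_filter_add_sum_filter_not E (fun e => (e ∩ S).card = 1)]
    congr 1
    · calc ∑ e ∈ E.filter fun e => (e ∩ S).card = 1, a ^ (e ∩ S).card
          = ∑ _e ∈ E.filter fun e => (e ∩ S).card = 1, a := by
            refine Finset.sum_congr rfl fun e he => ?_
            rw [(Finset.mem_filter.mp he).2, pow_one]
        _ = (D:ℝ) * a := by rw [Finset.sum_const, nsmul_eq_mul]
    · calc ∑ e ∈ E.filter fun e => ¬(e ∩ S).card = 1, a ^ (e ∩ S).card
          = ∑ _e ∈ E.filter fun e => ¬(e ∩ S).card = 1, (1:ℝ) := by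
            refine Finset.sum_congr rfl fun e he => ?_
            obtain ⟨heE, hne⟩ := Finset.mem_filter.mp he
            rcases hS1 e heE with h | h
            · rw [h, pow_zero]
            · exact absurd h hne
        _ = (M:ℝ) := by rw [Finset.sum_const, nsmul_eq_mul, mul_one]
  -- S is not everything
  have hcompl_pos : 0 < Sᶜ.card := by
    obtain ⟨e₀, he₀⟩ := Finset.card_pos.mp hm
    have h1 : (e₀ ∩ S).card ≤ 1 := by rcases hS1 e₀ he₀ with h | h <;> omega
    have h2 : (e₀ ∩ S).card + (e₀ \ S).card = e₀.card :=
      Finset.card_inter_add_card_sdiff e₀ S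
    have he₀k : e₀.card = k := huniform e₀ he₀
    have h3 : 0 < (e₀ \ S).card := by omega
    obtain ⟨w, hw⟩ := Finset.card_pos.mp h3
    exact Finset.card_pos.mpr ⟨w, Finset.mem_compl.mpr (Finset.mem_sdiff.mp hw).2⟩
  have hs_pos : 0 < ∑ i, x i ^ k := by
    rw [hsum]
    have h1 : (1:ℝ) ≤ (Sᶜ.card : ℝ) := by exact_mod_cast hcompl_pos
    nlinarith [mul_nonneg (Nat.cast_nonneg α : (0:ℝ) ≤ α) hakn]
  -- the eigenvalue inequality for the test vector
  have hmain := hoffman_scale_aux k (by omega) E huniform lam hlb x hs_pos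
  rw [hsum, hP] at hmain
  -- cast the counting facts to ℝ
  have hcardR : (α:ℝ) + (Sᶜ.card:ℝ) = (Fintype.card V : ℝ) := by
    have := Finset.card_add_card_compl S
    rw [hScard] at this
    exact_mod_cast this
  have hDMR : (D:ℝ) + (M:ℝ) = (E.card:ℝ) := by exact_mod_cast hDM
  have hδDR : (δ:ℝ) * (α:ℝ) ≤ (D:ℝ) := by exact_mod_cast hδD
  set F : ℝ := lam * a ^ k - lam + (k:ℝ) * (δ:ℝ) - (k:ℝ) * (δ:ℝ) * a with hFdef
  have hαF : (α:ℝ) * F ≤ (k:ℝ) * (E.card:ℝ) - (Fintype.card V : ℝ) * lam := by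
    have haux : 0 ≤ ((D:ℝ) - (δ:ℝ) * (α:ℝ)) * ((k:ℝ) * (1 - a)) := by
      apply mul_nonneg (by linarith)
      apply mul_nonneg (by positivity)
      linarith
    have hc' : (Sᶜ.card:ℝ) = (Fintype.card V : ℝ) - (α:ℝ) := by linarith
    have hM' : (M:ℝ) = (E.card:ℝ) - (D:ℝ) := by linarith
    rw [hc', hM'] at hmain
    rw [hFdef]
    nlinarith [hmain, haux]
  -- rpow algebra
  have h1r : (1:ℝ) + r = r * (k:ℕ) := by
    rw [hrdef]
    field_simp
    ring
  have hAkr : A ^ k = (δ:ℝ) ^ (r * (k:ℕ)) := by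
    rw [hAdef, ← Real.rpow_natCast ((δ:ℝ) ^ r) k, ← Real.rpow_mul (by positivity)]
  have hBkr : B ^ k = μ ^ (r * (k:ℕ)) := by
    rw [hBdef, ← Real.rpow_natCast (μ ^ r) k, ← Real.rpow_mul hμ.le]
  have hδA : (δ:ℝ) * A = A ^ k := by
    rw [hAkr, ← h1r, Real.rpow_add' (by positivity) (by positivity), Real.rpow_one, hAdef]
  have hμB : μ * B = B ^ k := by
    rw [hBkr, ← h1r, Real.rpow_add hμ, Real.rpow_one, hBdef]
  have haB : a * B = -A := by
    rw [hadef]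
    field_simp
  have hakB : lam * a ^ k * B = -(A ^ k) := by
    have hBk0 : B ^ k ≠ 0 := by positivity
    calc lam * a ^ k * B = -(A ^ k) * (μ * B) / B ^ k := by
          rw [hak, hlm]; ring
      _ = -(A ^ k) * B ^ k / B ^ k := by rw [hμB]
      _ = -(A ^ k) := by field_simp
  have hFB : F * B = ((k:ℝ) - 1) * A ^ k + ((k:ℝ) * (δ:ℝ) + μ) * B := by
    have e1 : F * B = lam * a ^ k * B - (k:ℝ) * (δ:ℝ) * (a * B) + (-lam + (k:ℝ) * (δ:ℝ)) * B := by
      rw [hFdef]; ring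
    rw [e1, hakB, haB, hlm]
    have : (k:ℝ) * (δ:ℝ) * A = (k:ℝ) * A ^ k := by rw [mul_assoc, hδA]
    nlinarith [hδA]
  -- identify the denominator of the goal
  have hAk2 : (δ:ℝ) ^ ((k:ℝ) / ((k:ℝ) - 1)) = A ^ k := by
    rw [hAkr]
    congr 1
    rw [hrdef]
    field_simp
  have hDen : ((k:ℝ) - 1) * (δ:ℝ) ^ ((k:ℝ) / ((k:ℝ) - 1)) + ((k:ℝ) * (δ:ℝ) - lam) * B
      = F * B := by
    rw [hAk2, hFB, hlm]
    ring
  have hFBpos : 0 < F * B := by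
    rw [hFB]
    have t1 : 0 ≤ ((k:ℝ) - 1) * A ^ k := mul_nonneg hk1.le (by positivity)
    have t2 : 0 < ((k:ℝ) * (δ:ℝ) + μ) * B := mul_pos (by positivity) hB
    linarith
  rw [hDen, le_div_iff₀ hFBpos]
  calc (α:ℝ) * (F * B) = ((α:ℝ) * F) * B := by ring
    _ ≤ ((k:ℝ) * (E.card:ℝ) - (Fintype.card V : ℝ) * lam) * B :=
        mul_le_mul_of_nonneg_right hαF hB.le
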